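/- Let λ be a partition with ℓ(λ) < n and gcd(n, |λ|) = 1, and set M = #SSYT_n(λ)/n (an integer). Then in ℤ[q] one has the congruence Σ_{T ∈ SSYT_n(λ)} q^{Σ_{i=1}^n (i−1)c_i(T)} ≡ M·(1 + q + q^2 + ⋯ + q^{n−1}) (mod q^n − 1); equivalently, q^{−κ(λ)} s_λ(1, q, …, q^{n−1}) ≡ M·(1 + q + ⋯ + q^{n−1}) (mod q^n − 1). -/

import Mathlib

open Finset

/-- Rank counting lemma: the number of elements of `S` whose rank (number of elements
of `S` that are `≤` it) is at most `b` equals `min b S.card`. -/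
theorem rank_filter_card (S : Finset ℕ) (b : ℕ) :
    (S.filter (fun j => (S.filter (fun j' => j' ≤ j)).card ≤ b)).card = min b S.card := by
  induction S using Finset.strongInduction with
  | _ S ih =>
    rcases S.eq_empty_or_nonempty with rfl | hS
    · simp
    · set Mx := S.max' hS with hMx
      have hMxS : Mx ∈ S := S.max'_mem hS
      set S' := S.erase Mx with hS'
      have hcard : S.card = S'.card + 1 := by
        rw [hS', Finset.card_erase_of_mem hMxS]
        have := Finset.card_pos.mpr hS
        omega
      have hsub : S' ⊂ S := Finset.erase_ssubset hMxS
      -- for j ∈ S', the rank within S equals the rank within S'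
      have hrank : ∀ j ∈ S', (S.filter (fun j' => j' ≤ j)).card
          = (S'.filter (fun j' => j' ≤ j)).card := by
        intro j hj
        congr 1
        apply Finset.ext
        intro x
        simp only [Finset.mem_filter, hS', Finset.mem_erase]
        constructor
        · rintro ⟨hx, hxj⟩
          refine ⟨⟨?_, hx⟩, hxj⟩
          rintro rfl
          have hjM : j ≤ Mx := S.le_max' j (Finset.mem_of_mem_erase hj)
          have hjne : j ≠ Mx := Finset.ne_of_mem_erase hj
          omega
        · rintro ⟨⟨_, hx⟩, hxj⟩; exact ⟨hx, hxj⟩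
      have hrankMx : (S.filter (fun j' => j' ≤ Mx)).card = S.card := by
        congr 1
        apply Finset.filter_true_of_mem
        intro x hx; exact S.le_max' x hx
      have hsplit : S.filter (fun j => (S.filter (fun j' => j' ≤ j)).card ≤ b)
          = (if S.card ≤ b then {Mx} else ∅) ∪
            S'.filter (fun j => (S'.filter (fun j' => j' ≤ j)).card ≤ b) := by
        apply Finset.ext
        intro x
        simp only [Finset.mem_filter, Finset.mem_union]
        constructor
        · rintro ⟨hx, hb⟩
          by_cases hxM : x = Mx
          · left; subst hxM; rw [hrankMx] at hb; simp [hb]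
          · right
            have hx' : x ∈ S' := Finset.mem_erase.mpr ⟨hxM, hx⟩
            exact ⟨hx', by rw [← hrank x hx']; exact hb⟩
        · rintro (h | h)
          · split_ifs at h with hc
            · simp only [Finset.mem_singleton] at h
              subst h
              exact ⟨hMxS, by rw [hrankMx]; exact hc⟩
            · simp at h
          · obtain ⟨hx', hb⟩ := h
            exact ⟨Finset.mem_of_mem_erase hx', by rw [hrank x hx']; exact hb⟩
      rw [hsplit, Finset.card_union_of_disjoint, ih S' hsub]
      · split_ifs with hc
        · simp only [Finset.card_singleton]
          omega
        · simp only [Finset.card_empty]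
          omega
      · split_ifs with hc
        · simp only [Finset.disjoint_singleton_left, Finset.mem_filter]
          rintro ⟨h, -⟩
          exact (Finset.ne_of_mem_erase h) rfl
        · exact Finset.disjoint_empty_left _


open Finset

namespace BKproof
variable {μ : YoungDiagram}

/-- A cell is *free* if its value is `k` with no `k+1` directly below,
or its value is `k+1` with no `k` directly above. -/
def IsFree (T : SemistandardYoungTableau μ) (k i j : ℕ) : Prop :=
  (i, j) ∈ μ ∧ ((T i j = k ∧ T (i+1) j ≠ k+1) ∨ (T i j = k+1 ∧ (i = 0 ∨ T (i-1) j ≠ k)))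

instance (T : SemistandardYoungTableau μ) (k i j : ℕ) : Decidable (IsFree T k i j) := by
  unfold IsFree; infer_instance

lemma IsFree.mem {T : SemistandardYoungTableau μ} {k i j : ℕ} (h : IsFree T k i j) :
    (i, j) ∈ μ := h.1

lemma IsFree.val {T : SemistandardYoungTableau μ} {k i j : ℕ} (h : IsFree T k i j) :
    T i j = k ∨ T i j = k + 1 := h.2.imp (fun h => h.1) (fun h => h.1)

lemma mem_of_ne_zero {T : SemistandardYoungTableau μ} {i j : ℕ} (h : T i j ≠ 0) :
    (i, j) ∈ μ := by
  by_contra hc; exact h (T.zeros hc)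

/-- The set of free columns in row `i`. -/
def freeRow (T : SemistandardYoungTableau μ) (k i : ℕ) : Finset ℕ :=
  (range (μ.rowLen i)).filter (fun j => IsFree T k i j)

lemma mem_freeRow {T : SemistandardYoungTableau μ} {k i j : ℕ} :
    j ∈ freeRow T k i ↔ IsFree T k i j := by
  simp only [freeRow, mem_filter, mem_range]
  refine ⟨fun h => h.2, fun h => ⟨?_, h⟩⟩
  exact YoungDiagram.mem_iff_lt_rowLen.mp h.mem

/-- Number of free cells in row `i`, in columns `≤ j`. -/
def cntLe (T : SemistandardYoungTableau μ) (k i j : ℕ) : ℕ :=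
  ((freeRow T k i).filter (fun j' => j' ≤ j)).card

/-- Number of free cells with value `k` in row `i`. -/
def Acnt (T : SemistandardYoungTableau μ) (k i : ℕ) : ℕ :=
  ((freeRow T k i).filter (fun j => T i j = k)).card

/-- Number of free cells with value `k+1` in row `i`. -/
def Bcnt (T : SemistandardYoungTableau μ) (k i : ℕ) : ℕ :=
  ((freeRow T k i).filter (fun j => T i j = k + 1)).card

/-- The entries of the Bender–Knuth involution. -/
def bkFun (T : SemistandardYoungTableau μ) (k : ℕ) : ℕ → ℕ → ℕ := fun i j =>
  if IsFree T k i j then (if cntLe T k i j ≤ Bcnt T k i then k else k + 1) else T i j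

lemma bkFun_of_not_free {T : SemistandardYoungTableau μ} {k i j : ℕ} (h : ¬ IsFree T k i j) :
    bkFun T k i j = T i j := if_neg h

lemma bkFun_of_free {T : SemistandardYoungTableau μ} {k i j : ℕ} (h : IsFree T k i j) :
    bkFun T k i j = if cntLe T k i j ≤ Bcnt T k i then k else k + 1 := if_pos h

lemma bkFun_val_of_free {T : SemistandardYoungTableau μ} {k i j : ℕ} (h : IsFree T k i j) :
    bkFun T k i j = k ∨ bkFun T k i j = k + 1 := by
  rw [bkFun_of_free h]; split_ifs <;> simp

lemma bkFun_of_ne {T : SemistandardYoungTableau μ} {k i j : ℕ}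
    (h1 : T i j ≠ k) (h2 : T i j ≠ k + 1) : bkFun T k i j = T i j := by
  apply bkFun_of_not_free
  intro h
  rcases h.val with h' | h' <;> [exact h1 h'; exact h2 h']

lemma cntLe_lt_cntLe_succ {T : SemistandardYoungTableau μ} {k i j : ℕ}
    (h : IsFree T k i (j+1)) : cntLe T k i j < cntLe T k i (j+1) := by
  apply Finset.card_lt_card
  constructor
  · intro x hx
    rw [mem_filter] at hx ⊢
    exact ⟨hx.1, by omega⟩
  · intro hsub
    have : j + 1 ∈ (freeRow T k i).filter (fun j' => j' ≤ j + 1) := by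
      rw [mem_filter]; exact ⟨mem_freeRow.mpr h, le_refl _⟩
    have := hsub this
    rw [mem_filter] at this
    omega

/-- Key ordering lemma: among free cells of a row, those with value `k`
are exactly those of `cntLe`-rank at most `Acnt`. -/
lemma cntLe_le_Acnt {T : SemistandardYoungTableau μ} {k i j : ℕ}
    (h : IsFree T k i j) (hv : T i j = k) : cntLe T k i j ≤ Acnt T k i := by
  apply Finset.card_le_card
  intro x hx
  rw [mem_filter] at hx ⊢
  refine ⟨hx.1, ?_⟩
  have hxf := mem_freeRow.mp hx.1
  have hle : T i x ≤ T i j := T.row_weak_of_le hx.2 h.mem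
  rcases hxf.val with h' | h' <;> omega

lemma Acnt_lt_cntLe {T : SemistandardYoungTableau μ} {k i j : ℕ}
    (h : IsFree T k i j) (hv : T i j = k + 1) : Acnt T k i < cntLe T k i j := by
  have hsub : insert j ((freeRow T k i).filter (fun x => T i x = k))
      ⊆ (freeRow T k i).filter (fun j' => j' ≤ j) := by
    intro x hx
    rw [Finset.mem_insert] at hx
    rw [mem_filter]
    rcases hx with rfl | hx
    · exact ⟨mem_freeRow.mpr h, le_refl _⟩
    · rw [mem_filter] at hx
      refine ⟨hx.1, ?_⟩
      by_contra hc
      push_neg at hc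
      have := T.row_weak hc (mem_freeRow.mp hx.1).mem
      omega
  have hj : j ∉ (freeRow T k i).filter (fun x => T i x = k) := by
    rw [mem_filter]; rintro ⟨-, h'⟩; omega
  calc Acnt T k i < (insert j ((freeRow T k i).filter (fun x => T i x = k))).card := by
        rw [Finset.card_insert_of_notMem hj]; exact Nat.lt_succ_self _
    _ ≤ cntLe T k i j := Finset.card_le_card hsub

/-- Row weak monotonicity for adjacent entries of `bkFun`. -/
lemma bkFun_row_adj {T : SemistandardYoungTableau μ} {k i j : ℕ} (hc : (i, j+1) ∈ μ) :
    bkFun T k i j ≤ bkFun T k i (j+1) := by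
  have hcl : (i, j) ∈ μ := μ.up_left_mem le_rfl (by omega) hc
  by_cases h1 : IsFree T k i j <;> by_cases h2 : IsFree T k i (j+1)
  · -- both free
    rw [bkFun_of_free h1, bkFun_of_free h2]
    have := cntLe_lt_cntLe_succ (j := j) h2
    split_ifs with ha hb <;> omega
  · -- j free, j+1 not free
    rw [bkFun_of_not_free h2]
    have hval : k ≤ T i j := by rcases h1.val with h | h <;> omega
    have hle : T i j ≤ T i (j+1) := T.row_weak (by omega) hc
    have hne : T i (j+1) ≠ k := by
      intro hk
      -- then T i j = k, and (i,j+1) is a non-free k, forcing T (i+1) (j+1) = k+1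
      have hTij : T i j = k := by omega
      have hbelow : T (i+1) (j+1) = k + 1 := by
        by_contra hb
        exact h2 ⟨hc, Or.inl ⟨hk, hb⟩⟩
      have hmem : (i+1, j+1) ∈ μ := mem_of_ne_zero (T := T) (i := i+1) (j := j+1) (by omega)
      have hmem' : (i+1, j) ∈ μ := μ.up_left_mem le_rfl (by omega) hmem
      have hgt : k < T (i+1) j := hTij ▸ T.col_strict (by omega) hmem'
      have hle2 : T (i+1) j ≤ T (i+1) (j+1) := T.row_weak (by omega) hmem
      have : T (i+1) j = k + 1 := by omega
      rcases h1.2 with ⟨-, hb⟩ | ⟨hb, -⟩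
      · exact hb this
      · omega
    have : k + 1 ≤ T i (j+1) := by omega
    rcases bkFun_val_of_free h1 with h | h <;> omega
  · -- j not free, j+1 free
    rw [bkFun_of_not_free h1]
    have hle : T i j ≤ T i (j+1) := T.row_weak (by omega) hc
    have hval : T i (j+1) ≤ k + 1 := by rcases h2.val with h | h <;> omega
    have hne : T i j ≠ k + 1 := by
      intro hk1
      have hTij1 : T i (j+1) = k + 1 := by omega
      -- (i,j) is a non-free k+1 : i ≠ 0 and T (i-1) j = k
      have hnf : ¬ (i = 0 ∨ T (i-1) j ≠ k) := by
        intro h'; exact h1 ⟨hcl, Or.inr ⟨hk1, h'⟩⟩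
      push_neg at hnf
      obtain ⟨hi0, habove⟩ := hnf
      -- then T (i-1) (j+1) = k, contradicting freeness of (i,j+1)
      have hma : (i-1, j+1) ∈ μ := μ.up_left_mem (by omega) le_rfl hc
      have h1' : T (i-1) j ≤ T (i-1) (j+1) := T.row_weak (by omega) hma
      have h2' : T (i-1) (j+1) < T i (j+1) := T.col_strict (by omega) hc
      have : T (i-1) (j+1) = k := by omega
      rcases h2.2 with ⟨hb, -⟩ | ⟨-, hb⟩
      · omega
      · rcases hb with hb | hb <;> omega
    have hlek : T i j ≤ k := by omega
    rcases bkFun_val_of_free h2 with h | h <;> omega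
  · rw [bkFun_of_not_free h1, bkFun_of_not_free h2]
    exact T.row_weak (by omega) hc

/-- Column strict monotonicity for adjacent entries of `bkFun`. -/
lemma bkFun_col_adj {T : SemistandardYoungTableau μ} {k i j : ℕ} (hc : (i+1, j) ∈ μ) :
    bkFun T k i j < bkFun T k (i+1) j := by
  have hcl : (i, j) ∈ μ := μ.up_left_mem (by omega) le_rfl hc
  have hlt : T i j < T (i+1) j := T.col_strict (by omega) hc
  by_cases h1 : IsFree T k i j
  · -- (i,j) free: entry below is ≥ k+2 and unchanged
    have hge : k + 2 ≤ T (i+1) j := by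
      rcases h1.2 with ⟨hv, hb⟩ | ⟨hv, -⟩
      · omega
      · omega
    have : bkFun T k (i+1) j = T (i+1) j := bkFun_of_ne (by omega) (by omega)
    rcases bkFun_val_of_free h1 with h | h <;> omega
  · rw [bkFun_of_not_free h1]
    by_cases hk : T i j = k
    · -- non-free k: below is a non-free k+1
      have hbelow : T (i+1) j = k + 1 := by
        by_contra hb
        exact h1 ⟨hcl, Or.inl ⟨hk, hb⟩⟩
      have : ¬ IsFree T k (i+1) j := by
        rintro ⟨-, ⟨hv, -⟩ | ⟨-, hb | hb⟩⟩
        · omega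
        · omega
        · simp only [Nat.add_sub_cancel] at hb
          exact hb hk
      rw [bkFun_of_not_free this]
      omega
    · by_cases hk1 : T i j = k + 1
      · -- non-free k+1: below ≥ k+2 unchanged
        have hge : k + 2 ≤ T (i+1) j := by omega
        rw [bkFun_of_ne (by omega) (by omega)]
        omega
      · -- value outside {k, k+1}
        by_cases h2 : IsFree T k (i+1) j
        · have hv : T (i+1) j = k ∨ T (i+1) j = k+1 := h2.val
          have : T i j < k := by omega
          rcases bkFun_val_of_free h2 with h | h <;> omega
        · rw [bkFun_of_not_free h2]; omega

/-- The Bender–Knuth move as a semistandard Young tableau. -/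
def bk (T : SemistandardYoungTableau μ) (k : ℕ) : SemistandardYoungTableau μ where
  entry := bkFun T k
  row_weak' := by
    intro i j1 j2 hj hc
    have key : ∀ d j, (i, j + d + 1) ∈ μ → bkFun T k i j ≤ bkFun T k i (j + d + 1) := by
      intro d
      induction d with
      | zero => intro j hc; exact bkFun_row_adj hc
      | succ d ih =>
        intro j hc
        have hc' : (i, j + d + 1) ∈ μ := μ.up_left_mem le_rfl (by omega) hc
        calc bkFun T k i j ≤ bkFun T k i (j + d + 1) := ih j hc'
          _ ≤ bkFun T k i (j + (d+1) + 1) := by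
              have : j + (d+1) + 1 = (j + d + 1) + 1 := by omega
              rw [this]
              exact bkFun_row_adj (by rw [← this]; exact hc)
    have h : j2 = j1 + (j2 - j1 - 1) + 1 := by omega
    rw [h] at hc ⊢
    exact key _ _ hc
  col_strict' := by
    intro i1 i2 j hi hc
    have key : ∀ d i, (i + d + 1, j) ∈ μ → bkFun T k i j < bkFun T k (i + d + 1) j := by
      intro d
      induction d with
      | zero => intro i hc; exact bkFun_col_adj hc
      | succ d ih =>
        intro i hc
        have hc' : (i + d + 1, j) ∈ μ := μ.up_left_mem (by omega) le_rfl hc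
        calc bkFun T k i j < bkFun T k (i + d + 1) j := ih i hc'
          _ < bkFun T k (i + (d+1) + 1) j := by
              have : i + (d+1) + 1 = (i + d + 1) + 1 := by omega
              rw [this]
              exact bkFun_col_adj (by rw [← this]; exact hc)
    have h : i2 = i1 + (i2 - i1 - 1) + 1 := by omega
    rw [h] at hc ⊢
    exact key _ _ hc
  zeros' := by
    intro i j h
    rw [bkFun_of_not_free (fun hf => h hf.mem)]
    exact T.zeros h

@[simp] lemma bk_apply (T : SemistandardYoungTableau μ) (k i j : ℕ) :
    bk T k i j = bkFun T k i j := rfl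

end BKproof

namespace BKproof
variable {μ : YoungDiagram}

/-- Decompose a count over the cells of `μ` into a sum over rows. -/
lemma cells_card_eq_sum_rows (p : ℕ → ℕ → Prop) [∀ i j, Decidable (p i j)] :
    (μ.cells.filter (fun c => p c.1 c.2)).card
      = ∑ i ∈ range (μ.colLen 0), ((range (μ.rowLen i)).filter (fun j => p i j)).card := by
  rw [Finset.card_eq_sum_card_fiberwise (f := Prod.fst) (t := range (μ.colLen 0))]
  · apply Finset.sum_congr rfl
    intro i _
    apply Finset.card_bij (fun c _ => c.2)
    · intro c hc
      simp only [mem_filter] at hc ⊢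
      obtain ⟨⟨hcell, hp⟩, hfst⟩ := hc
      rw [YoungDiagram.mem_cells] at hcell
      subst hfst
      exact ⟨mem_range.mpr (YoungDiagram.mem_iff_lt_rowLen.mp hcell), hp⟩
    · intro a ha b hb hab
      simp only [mem_filter] at ha hb
      have : a = (a.1, a.2) := rfl
      have : b = (b.1, b.2) := rfl
      ext
      · omega
      · exact hab
    · intro j hj
      simp only [mem_filter, mem_range] at hj
      refine ⟨(i, j), ?_, rfl⟩
      simp only [mem_filter]
      exact ⟨⟨(YoungDiagram.mem_cells _).mpr (YoungDiagram.mem_iff_lt_rowLen.mpr hj.1), hj.2⟩, trivial⟩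
  · intro c hc
    simp only [Finset.mem_coe, mem_filter] at hc
    rw [Finset.mem_coe, mem_range]
    have hcell := (YoungDiagram.mem_cells _).mp hc.1
    have h1 : c.1 < μ.colLen c.2 := YoungDiagram.mem_iff_lt_colLen.mp (by
      cases c; exact hcell)
    calc c.1 < μ.colLen c.2 := h1
      _ ≤ μ.colLen 0 := μ.colLen_anti 0 c.2 (Nat.zero_le _)

/-- Number of cells of value `v`. -/
def cnt (T : SemistandardYoungTableau μ) (v : ℕ) : ℕ :=
  (μ.cells.filter (fun c => T c.1 c.2 = v)).card

/-- Non-free cells of value `k` (those with a `k+1` directly below). -/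
def NFk (T : SemistandardYoungTableau μ) (k : ℕ) : Finset (ℕ × ℕ) :=
  μ.cells.filter (fun c => T c.1 c.2 = k ∧ T (c.1+1) c.2 = k+1)

/-- Non-free cells of value `k+1` (those with a `k` directly above). -/
def NFk1 (T : SemistandardYoungTableau μ) (k : ℕ) : Finset (ℕ × ℕ) :=
  μ.cells.filter (fun c => T c.1 c.2 = k+1 ∧ (c.1 ≠ 0 ∧ T (c.1-1) c.2 = k))

lemma NFk_card_eq (T : SemistandardYoungTableau μ) (k : ℕ) :
    (NFk T k).card = (NFk1 T k).card := by
  apply Finset.card_bij (fun c _ => (c.1 + 1, c.2))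
  · intro c hc
    simp only [NFk, NFk1, mem_filter] at hc ⊢
    obtain ⟨hcell, hv, hb⟩ := hc
    refine ⟨mem_of_ne_zero (T := T) (i := c.1+1) (j := c.2) (by omega), hb, by omega, ?_⟩
    show T (c.1 + 1 - 1) c.2 = k
    rw [Nat.add_sub_cancel]
    exact hv
  · intro a ha b hb hab
    simp only [Prod.mk.injEq] at hab
    have : a = (a.1, a.2) := rfl
    have : b = (b.1, b.2) := rfl
    ext <;> omega
  · intro c hc
    simp only [NFk, NFk1, mem_filter] at hc
    obtain ⟨hcell, hv, hi0, ha⟩ := hc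
    refine ⟨(c.1 - 1, c.2), ?_, ?_⟩
    · simp only [NFk, mem_filter]
      have hc' : (c.1, c.2) ∈ μ := by
        rw [YoungDiagram.mem_cells] at hcell
        cases c; exact hcell
      have hmem : (c.1 - 1, c.2) ∈ μ := μ.up_left_mem (Nat.sub_le _ _) le_rfl hc'
      refine ⟨(YoungDiagram.mem_cells _).mpr hmem, ha, ?_⟩
      have : c.1 - 1 + 1 = c.1 := by omega
      rw [this]
      exact hv
    · have : c.1 - 1 + 1 = c.1 := by omega
      rw [Prod.ext_iff]
      exact ⟨this, rfl⟩

lemma not_free_k {T : SemistandardYoungTableau μ} {k i j : ℕ} (hcell : (i, j) ∈ μ)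
    (hv : T i j = k) : ¬ IsFree T k i j ↔ T (i+1) j = k + 1 := by
  constructor
  · intro h
    by_contra hb
    exact h ⟨hcell, Or.inl ⟨hv, hb⟩⟩
  · rintro hb ⟨-, ⟨-, hb'⟩ | ⟨hv', -⟩⟩
    · exact hb' hb
    · omega

lemma not_free_k1 {T : SemistandardYoungTableau μ} {k i j : ℕ} (hcell : (i, j) ∈ μ)
    (hv : T i j = k + 1) : ¬ IsFree T k i j ↔ (i ≠ 0 ∧ T (i-1) j = k) := by
  constructor
  · intro h
    by_contra hb
    apply h
    refine ⟨hcell, Or.inr ⟨hv, ?_⟩⟩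
    push_neg at hb
    by_cases hi : i = 0
    · exact Or.inl hi
    · exact Or.inr (hb hi)
  · rintro ⟨hi0, ha⟩ ⟨-, ⟨hv', -⟩ | ⟨-, hb | hb⟩⟩
    · omega
    · exact hi0 hb
    · exact hb ha

/-- Cells of value `k` split into non-free ones and free ones. -/
lemma cnt_k_eq (T : SemistandardYoungTableau μ) (k : ℕ) :
    cnt T k = (NFk T k).card + ∑ i ∈ range (μ.colLen 0), Acnt T k i := by
  have hsplit : μ.cells.filter (fun c => T c.1 c.2 = k)
      = NFk T k ∪ μ.cells.filter (fun c => IsFree T k c.1 c.2 ∧ T c.1 c.2 = k) := by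
    ext c
    simp only [NFk, mem_union, mem_filter]
    constructor
    · rintro ⟨hcell, hv⟩
      by_cases hf : IsFree T k c.1 c.2
      · exact Or.inr ⟨hcell, hf, hv⟩
      · have := (not_free_k (by rw [← YoungDiagram.mem_cells]; exact hcell) hv).mp ?_
        · exact Or.inl ⟨hcell, hv, this⟩
        · convert hf
    · rintro (⟨hcell, hv, -⟩ | ⟨hcell, -, hv⟩) <;> exact ⟨hcell, hv⟩
  rw [cnt, hsplit, Finset.card_union_of_disjoint]
  · congr 1
    rw [cells_card_eq_sum_rows (fun i j => IsFree T k i j ∧ T i j = k)]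
    apply Finset.sum_congr rfl
    intro i _
    rw [Acnt, freeRow, Finset.filter_filter]
  · rw [Finset.disjoint_left]
    intro c hc1 hc2
    simp only [NFk, mem_filter] at hc1 hc2
    obtain ⟨hcell, hv, hb⟩ := hc1
    obtain ⟨-, hf, -⟩ := hc2
    exact (not_free_k (by rw [← YoungDiagram.mem_cells]; exact hcell) hv).mpr hb hf

lemma cnt_k1_eq (T : SemistandardYoungTableau μ) (k : ℕ) :
    cnt T (k+1) = (NFk1 T k).card + ∑ i ∈ range (μ.colLen 0), Bcnt T k i := by
  have hsplit : μ.cells.filter (fun c => T c.1 c.2 = k+1)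
      = NFk1 T k ∪ μ.cells.filter (fun c => IsFree T k c.1 c.2 ∧ T c.1 c.2 = k+1) := by
    ext c
    simp only [NFk1, mem_union, mem_filter]
    constructor
    · rintro ⟨hcell, hv⟩
      by_cases hf : IsFree T k c.1 c.2
      · exact Or.inr ⟨hcell, hf, hv⟩
      · have := (not_free_k1 (by rw [← YoungDiagram.mem_cells]; exact hcell) hv).mp ?_
        · exact Or.inl ⟨hcell, hv, this⟩
        · convert hf
    · rintro (⟨hcell, hv, -⟩ | ⟨hcell, -, hv⟩) <;> exact ⟨hcell, hv⟩
  rw [cnt, hsplit, Finset.card_union_of_disjoint]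
  · congr 1
    rw [cells_card_eq_sum_rows (fun i j => IsFree T k i j ∧ T i j = k+1)]
    apply Finset.sum_congr rfl
    intro i _
    rw [Bcnt, freeRow, Finset.filter_filter]
  · rw [Finset.disjoint_left]
    intro c hc1 hc2
    simp only [NFk1, mem_filter] at hc1 hc2
    obtain ⟨hcell, hv, hb⟩ := hc1
    obtain ⟨-, hf, -⟩ := hc2
    exact (not_free_k1 (by rw [← YoungDiagram.mem_cells]; exact hcell) hv).mpr hb hf

end BKproof

namespace BKproof
variable {μ : YoungDiagram}

lemma Bcnt_le (T : SemistandardYoungTableau μ) (k i : ℕ) :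
    Bcnt T k i ≤ (freeRow T k i).card := Finset.card_filter_le _ _

lemma Acnt_add_Bcnt (T : SemistandardYoungTableau μ) (k i : ℕ) :
    Acnt T k i + Bcnt T k i = (freeRow T k i).card := by
  have heq : ((freeRow T k i).filter (fun j => T i j = k+1))
      = ((freeRow T k i).filter (fun j => ¬ T i j = k)) := by
    apply Finset.filter_congr
    intro j hj
    have := (mem_freeRow.mp hj).val
    constructor <;> intro h <;> omega
  rw [Acnt, Bcnt, heq]
  exact Finset.card_filter_add_card_filter_not (p := fun j => T i j = k)

lemma newk_row_card (T : SemistandardYoungTableau μ) (k i : ℕ) :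
    ((freeRow T k i).filter (fun j => cntLe T k i j ≤ Bcnt T k i)).card = Bcnt T k i := by
  have h := rank_filter_card (freeRow T k i) (Bcnt T k i)
  rw [min_eq_left (Bcnt_le T k i)] at h
  exact h

lemma newk1_row_card (T : SemistandardYoungTableau μ) (k i : ℕ) :
    ((freeRow T k i).filter (fun j => ¬ cntLe T k i j ≤ Bcnt T k i)).card = Acnt T k i := by
  have h1 := Finset.card_filter_add_card_filter_not
    (s := freeRow T k i) (p := fun j => cntLe T k i j ≤ Bcnt T k i)
  have h2 := newk_row_card T k i
  have h3 := Acnt_add_Bcnt T k i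
  omega

lemma cnt_bk_k (T : SemistandardYoungTableau μ) (k : ℕ) :
    cnt (bk T k) k = cnt T (k+1) := by
  have hsplit : μ.cells.filter (fun c => bkFun T k c.1 c.2 = k)
      = μ.cells.filter (fun c => IsFree T k c.1 c.2 ∧ cntLe T k c.1 c.2 ≤ Bcnt T k c.1)
        ∪ NFk T k := by
    ext c
    simp only [NFk, mem_union, mem_filter]
    constructor
    · rintro ⟨hcell, hv⟩
      by_cases hf : IsFree T k c.1 c.2
      · rw [bkFun_of_free hf] at hv
        left
        refine ⟨hcell, hf, ?_⟩
        by_contra hc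
        rw [if_neg hc] at hv
        omega
      · rw [bkFun_of_not_free hf] at hv
        right
        refine ⟨hcell, hv, ?_⟩
        exact (not_free_k ((YoungDiagram.mem_cells _).mp hcell) hv).mp hf
    · rintro (⟨hcell, hf, hle⟩ | ⟨hcell, hv, hb⟩)
      · refine ⟨hcell, ?_⟩
        rw [bkFun_of_free hf, if_pos hle]
      · refine ⟨hcell, ?_⟩
        have hnf : ¬ IsFree T k c.1 c.2 :=
          (not_free_k ((YoungDiagram.mem_cells _).mp hcell) hv).mpr hb
        rw [bkFun_of_not_free hnf]
        exact hv
  have : cnt (bk T k) k = (μ.cells.filter (fun c => bkFun T k c.1 c.2 = k)).card := rfl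
  rw [this, hsplit, Finset.card_union_of_disjoint, cnt_k1_eq T k, ← NFk_card_eq T k]
  · rw [Nat.add_comm]
    congr 1
    rw [cells_card_eq_sum_rows (fun i j => IsFree T k i j ∧ cntLe T k i j ≤ Bcnt T k i)]
    apply Finset.sum_congr rfl
    intro i _
    have h := newk_row_card T k i
    rw [freeRow, Finset.filter_filter] at h
    exact h
  · rw [Finset.disjoint_left]
    intro c hc1 hc2
    simp only [NFk, mem_filter] at hc1 hc2
    obtain ⟨hcell, hf, -⟩ := hc1
    obtain ⟨-, hv, hb⟩ := hc2
    exact (not_free_k ((YoungDiagram.mem_cells _).mp hcell) hv).mpr hb hf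

lemma cnt_bk_k1 (T : SemistandardYoungTableau μ) (k : ℕ) :
    cnt (bk T k) (k+1) = cnt T k := by
  have hsplit : μ.cells.filter (fun c => bkFun T k c.1 c.2 = k+1)
      = μ.cells.filter (fun c => IsFree T k c.1 c.2 ∧ ¬ cntLe T k c.1 c.2 ≤ Bcnt T k c.1)
        ∪ NFk1 T k := by
    ext c
    simp only [NFk1, mem_union, mem_filter]
    constructor
    · rintro ⟨hcell, hv⟩
      by_cases hf : IsFree T k c.1 c.2
      · rw [bkFun_of_free hf] at hv
        left
        refine ⟨hcell, hf, ?_⟩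
        intro hc
        rw [if_pos hc] at hv
        omega
      · rw [bkFun_of_not_free hf] at hv
        right
        refine ⟨hcell, hv, ?_⟩
        exact (not_free_k1 ((YoungDiagram.mem_cells _).mp hcell) hv).mp hf
    · rintro (⟨hcell, hf, hle⟩ | ⟨hcell, hv, hb⟩)
      · refine ⟨hcell, ?_⟩
        rw [bkFun_of_free hf, if_neg hle]
      · refine ⟨hcell, ?_⟩
        have hnf : ¬ IsFree T k c.1 c.2 :=
          (not_free_k1 ((YoungDiagram.mem_cells _).mp hcell) hv).mpr hb
        rw [bkFun_of_not_free hnf]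
        exact hv
  have : cnt (bk T k) (k+1) = (μ.cells.filter (fun c => bkFun T k c.1 c.2 = k+1)).card := rfl
  rw [this, hsplit, Finset.card_union_of_disjoint, cnt_k_eq T k, ← NFk_card_eq T k]
  · rw [Nat.add_comm]
    congr 1
    rw [cells_card_eq_sum_rows (fun i j => IsFree T k i j ∧ ¬ cntLe T k i j ≤ Bcnt T k i)]
    apply Finset.sum_congr rfl
    intro i _
    have h := newk1_row_card T k i
    rw [freeRow, Finset.filter_filter] at h
    exact h
  · rw [Finset.disjoint_left]
    intro c hc1 hc2
    simp only [NFk1, mem_filter] at hc1 hc2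
    obtain ⟨hcell, hf, -⟩ := hc1
    obtain ⟨-, hv, hb⟩ := hc2
    exact (not_free_k1 ((YoungDiagram.mem_cells _).mp hcell) hv).mpr hb hf

lemma cnt_bk_other (T : SemistandardYoungTableau μ) {k v : ℕ} (h1 : v ≠ k) (h2 : v ≠ k + 1) :
    cnt (bk T k) v = cnt T v := by
  have : cnt (bk T k) v = (μ.cells.filter (fun c => bkFun T k c.1 c.2 = v)).card := rfl
  rw [this, cnt]
  congr 1
  apply Finset.filter_congr
  intro c _
  by_cases hf : IsFree T k c.1 c.2
  · rcases hf.val with hv | hv <;> rcases bkFun_val_of_free hf with hv' | hv' <;>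
      constructor <;> intro h <;> omega
  · rw [bkFun_of_not_free hf]

lemma isFree_bk (T : SemistandardYoungTableau μ) (k i j : ℕ) :
    IsFree (bk T k) k i j ↔ IsFree T k i j := by
  constructor
  · -- contrapositive
    intro hf
    by_contra h
    have hmem : (i, j) ∈ μ := hf.mem
    have hself : bkFun T k i j = T i j := bkFun_of_not_free h
    -- case on the value of T i j
    by_cases hk : T i j = k
    · have hb : T (i+1) j = k + 1 := (not_free_k hmem hk).mp h
      have hbmem : (i+1, j) ∈ μ := mem_of_ne_zero (T := T) (i := i+1) (j := j) (by omega)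
      have hbnf : ¬ IsFree T k (i+1) j := by
        apply (not_free_k1 hbmem hb).mpr
        refine ⟨by omega, ?_⟩
        show T (i+1-1) j = k
        rw [Nat.add_sub_cancel]
        exact hk
      have hbk : bkFun T k (i+1) j = k + 1 := by rw [bkFun_of_not_free hbnf]; exact hb
      rcases hf.2 with ⟨-, hne⟩ | ⟨hv, -⟩
      · exact hne hbk
      · rw [bk_apply, hself] at hv; omega
    · by_cases hk1 : T i j = k + 1
      · obtain ⟨hi0, ha⟩ := (not_free_k1 hmem hk1).mp h
        have hamem : (i-1, j) ∈ μ := μ.up_left_mem (Nat.sub_le _ _) le_rfl hmem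
        have hanf : ¬ IsFree T k (i-1) j := by
          apply (not_free_k hamem ha).mpr
          show T (i-1+1) j = k + 1
          rw [Nat.sub_add_cancel (by omega)]
          exact hk1
        have hak : bkFun T k (i-1) j = k := by rw [bkFun_of_not_free hanf]; exact ha
        rcases hf.2 with ⟨hv, -⟩ | ⟨-, hor⟩
        · rw [bk_apply, hself] at hv; omega
        · rcases hor with h0 | hne
          · exact hi0 h0
          · exact hne hak
      · rcases hf.2 with ⟨hv, -⟩ | ⟨hv, -⟩ <;>
          (rw [bk_apply, hself] at hv; omega)
  · intro h
    refine ⟨h.mem, ?_⟩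
    have hbelow : bkFun T k (i+1) j ≠ k + 1 := by
      by_cases hbm : (i+1, j) ∈ μ
      · have hgt : T i j < T (i+1) j := T.col_strict (by omega) hbm
        have hge : k + 2 ≤ T (i+1) j := by
          rcases h.2 with ⟨hv, hb⟩ | ⟨hv, -⟩ <;> omega
        rw [bkFun_of_ne (by omega) (by omega)]
        omega
      · rw [bkFun_of_not_free (fun hf => hbm hf.mem), T.zeros hbm]
        omega
    have habove : i = 0 ∨ bkFun T k (i-1) j ≠ k := by
      by_cases hi0 : i = 0
      · exact Or.inl hi0
      · right
        have hamem : (i-1, j) ∈ μ := μ.up_left_mem (Nat.sub_le _ _) le_rfl h.mem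
        have hlt : T (i-1) j < T i j := T.col_strict (by omega) h.mem
        rcases h.2 with ⟨hv, -⟩ | ⟨hv, hor⟩
        · rw [bkFun_of_ne (by omega) (by omega)]
          omega
        · have hne : T (i-1) j ≠ k := by
            rcases hor with h0 | hne
            · exact absurd h0 hi0
            · exact hne
          rw [bkFun_of_ne hne (by omega)]
          exact hne
    rcases bkFun_val_of_free h with hv | hv
    · exact Or.inl ⟨hv, hbelow⟩
    · exact Or.inr ⟨hv, habove⟩

lemma freeRow_bk (T : SemistandardYoungTableau μ) (k i : ℕ) :
    freeRow (bk T k) k i = freeRow T k i := by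
  ext j
  rw [mem_freeRow, mem_freeRow, isFree_bk]

lemma cntLe_bk (T : SemistandardYoungTableau μ) (k i j : ℕ) :
    cntLe (bk T k) k i j = cntLe T k i j := by
  rw [cntLe, cntLe, freeRow_bk]

lemma Bcnt_bk (T : SemistandardYoungTableau μ) (k i : ℕ) :
    Bcnt (bk T k) k i = Acnt T k i := by
  rw [Bcnt, freeRow_bk, ← newk1_row_card T k i]
  congr 1
  apply Finset.filter_congr
  intro j hj
  have hf := mem_freeRow.mp hj
  rw [bk_apply, bkFun_of_free hf]
  split_ifs with hle <;> constructor <;> intro hh <;> omega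

lemma bk_bk (T : SemistandardYoungTableau μ) (k : ℕ) : bk (bk T k) k = T := by
  ext i j
  by_cases hf : IsFree T k i j
  · have hf' : IsFree (bk T k) k i j := (isFree_bk T k i j).mpr hf
    rw [bk_apply, bkFun_of_free hf', cntLe_bk, Bcnt_bk]
    rcases hf.val with hv | hv
    · rw [if_pos (cntLe_le_Acnt hf hv), hv]
    · rw [if_neg (by have := Acnt_lt_cntLe hf hv; omega), hv]
  · have hf' : ¬ IsFree (bk T k) k i j := fun h => hf ((isFree_bk T k i j).mp h)
    rw [bk_apply, bkFun_of_not_free hf', bk_apply, bkFun_of_not_free hf]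

lemma bk_lt {T : SemistandardYoungTableau μ} {n : ℕ} (hT : ∀ i j, (i, j) ∈ μ → T i j < n)
    {k : ℕ} (hk : k + 1 < n) : ∀ i j, (i, j) ∈ μ → bk T k i j < n := by
  intro i j hij
  rw [bk_apply]
  by_cases hf : IsFree T k i j
  · rcases bkFun_val_of_free hf with h | h <;> omega
  · rw [bkFun_of_not_free hf]; exact hT i j hij

end BKproof

namespace BKproof
variable {μ : YoungDiagram}

/-- Iterated Bender–Knuth moves `bk _ (m-1) ∘ ⋯ ∘ bk _ 0`. -/
def iterBK (T : SemistandardYoungTableau μ) : ℕ → SemistandardYoungTableau μ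
  | 0 => T
  | m+1 => bk (iterBK T m) m

lemma cnt_iterBK (T : SemistandardYoungTableau μ) (m v : ℕ) :
    cnt (iterBK T m) v
      = if v < m then cnt T (v+1) else if v = m then cnt T 0 else cnt T v := by
  induction m generalizing v with
  | zero =>
    rw [if_neg (by omega)]
    by_cases h : v = 0
    · rw [if_pos h, h]; rfl
    · rw [if_neg h]; rfl
  | succ m ih =>
    show cnt (bk (iterBK T m) m) v = _
    by_cases h1 : v = m
    · subst h1
      rw [cnt_bk_k, ih (v+1), if_neg (by omega), if_neg (by omega), if_pos (by omega)]
    · by_cases h2 : v = m + 1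
      · subst h2
        rw [cnt_bk_k1, ih m, if_neg (by omega), if_pos rfl, if_neg (by omega), if_pos rfl]
      · rw [cnt_bk_other _ h1 h2, ih v]
        by_cases h3 : v < m
        · rw [if_pos h3, if_pos (by omega)]
        · rw [if_neg h3, if_neg h1, if_neg (by omega), if_neg h2]

lemma iterBK_lt {T : SemistandardYoungTableau μ} {n : ℕ}
    (hT : ∀ i j, (i, j) ∈ μ → T i j < n) {m : ℕ} (hm : m < n) :
    ∀ i j, (i, j) ∈ μ → iterBK T m i j < n := by
  induction m with
  | zero => exact hT
  | succ m ih => exact bk_lt (ih (by omega)) hm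

lemma iterBK_inj {T T' : SemistandardYoungTableau μ} {m : ℕ}
    (h : iterBK T m = iterBK T' m) : T = T' := by
  induction m with
  | zero => exact h
  | succ m ih =>
    apply ih
    have h' : bk (iterBK T m) m = bk (iterBK T' m) m := h
    have := congrArg (fun S => bk S m) h'
    simpa only [bk_bk] using this

/-- The weight of a tableau with entries `< n`. -/
def wgt (T : SemistandardYoungTableau μ) (n : ℕ) : ℕ := ∑ v ∈ range n, v * cnt T v

lemma sum_cnt {T : SemistandardYoungTableau μ} {n : ℕ}
    (hT : ∀ i j, (i, j) ∈ μ → T i j < n) :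
    ∑ v ∈ range n, cnt T v = μ.card := by
  rw [YoungDiagram.card]
  rw [Finset.card_eq_sum_card_fiberwise (f := fun c => T c.1 c.2) (t := range n)]
  · rfl
  · intro c hc
    rw [Finset.mem_coe, mem_range]
    rw [Finset.mem_coe, YoungDiagram.mem_cells] at hc
    exact hT c.1 c.2 (by cases c; exact hc)

lemma wgt_iterBK {T : SemistandardYoungTableau μ} {n : ℕ}
    (hT : ∀ i j, (i, j) ∈ μ → T i j < n) (hn : 0 < n) :
    wgt (iterBK T (n-1)) n + μ.card = wgt T n + n * cnt T 0 := by
  obtain ⟨m, rfl⟩ : ∃ m, n = m + 1 := ⟨n - 1, by omega⟩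
  have hcard : μ.card = ∑ v ∈ range (m+1), cnt T v := (sum_cnt hT).symm
  simp only [Nat.add_sub_cancel]
  rw [wgt, wgt, hcard]
  rw [Finset.sum_range_succ (fun v => v * cnt (iterBK T m) v) m]
  rw [Finset.sum_range_succ' (fun v => v * cnt T v) m]
  rw [Finset.sum_range_succ' (fun v => cnt T v) m]
  have h1 : cnt (iterBK T m) m = cnt T 0 := by
    rw [cnt_iterBK, if_neg (by omega), if_pos rfl]
  have h2 : ∀ v ∈ range m, v * cnt (iterBK T m) v = v * cnt T (v+1) := by
    intro v hv
    rw [cnt_iterBK, if_pos (mem_range.mp hv)]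
  rw [Finset.sum_congr rfl h2, h1]
  have h3 : ∑ v ∈ range m, (v+1) * cnt T (v+1)
      = ∑ v ∈ range m, v * cnt T (v+1) + ∑ v ∈ range m, cnt T (v+1) := by
    rw [← Finset.sum_add_distrib]
    apply Finset.sum_congr rfl
    intro v _
    ring
  rw [h3]
  ring

end BKproof




open Finset

/-- Semistandard Young tableaux of shape `μ` with entries in `{0, …, n-1}`
(the 0-indexed version of entries in `{1, …, n}`). -/
def SSYTn (μ : YoungDiagram) (n : ℕ) : Type :=
  {T : SemistandardYoungTableau μ // ∀ i j : ℕ, (i, j) ∈ μ → T i j < n}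

noncomputable instance (μ : YoungDiagram) (n : ℕ) : Fintype (SSYTn μ n) := by
  apply Fintype.ofInjective
    (fun (T : SSYTn μ n) (c : μ.cells) =>
      (⟨T.1 c.1.1 c.1.2,
        Nat.lt_succ_of_lt (T.2 c.1.1 c.1.2 c.2)⟩ :
        Fin (n + 1)))
  intro T T' h
  apply Subtype.ext
  apply SemistandardYoungTableau.ext
  intro i j
  by_cases hij : (i, j) ∈ μ
  · have := congrFun h ⟨(i, j), (YoungDiagram.mem_cells _).mpr hij⟩
    simpa using congrArg Fin.val this
  · rw [T.1.zeros hij, T'.1.zeros hij]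

/-- The content of a tableau: `ssytContent μ n T k` is the number of entries of `T`
equal to `k` (0-indexed). -/
def ssytContent (μ : YoungDiagram) (n : ℕ) (T : SSYTn μ n) : Fin n → ℕ :=
  fun k => (μ.cells.filter (fun c => T.1 c.1 c.2 = (k : ℕ))).card

/-- The cyclic shift `c(x_1,…,x_n) = (x_n, x_1, …, x_{n-1})` (0-indexed). -/
def cycShift {n : ℕ} {α : Type*} (x : Fin n → α) : Fin n → α :=
  fun i => if _h : (i : ℕ) = 0 then x ⟨n - 1, by have := i.isLt; omega⟩
           else x ⟨(i : ℕ) - 1, by have := i.isLt; omega⟩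


theorem stmt9 (n : ℕ) (μ : YoungDiagram) (hlen : μ.colLen 0 < n)
    (hgcd : Nat.Coprime n μ.card)
    (M : ℕ) (hM : Fintype.card (SSYTn μ n) = n * M) :
    ((Polynomial.X : Polynomial ℤ) ^ n - 1) ∣
      (∑ T : SSYTn μ n,
          (Polynomial.X : Polynomial ℤ) ^ (∑ i : Fin n, (i : ℕ) * ssytContent μ n T i))
        - (M : Polynomial ℤ) * ∑ k ∈ Finset.range n, (Polynomial.X : Polynomial ℤ) ^ k := by
  classical
  have hn : 0 < n := by omega
  haveI : NeZero n := ⟨by omega⟩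
  set w : SSYTn μ n → ℕ := fun T => BKproof.wgt T.1 n with hw
  -- the exponent is the weight
  have hexp : ∀ T : SSYTn μ n, (∑ i : Fin n, (i : ℕ) * ssytContent μ n T i) = w T := by
    intro T
    show _ = BKproof.wgt T.1 n
    rw [show BKproof.wgt T.1 n = ∑ v ∈ Finset.range n, v * BKproof.cnt T.1 v from rfl]
    rw [← Fin.sum_univ_eq_sum_range (fun v => v * BKproof.cnt T.1 v) n]
    rfl
  -- the injection shifting the weight by -|μ| mod n
  set Φ : SSYTn μ n → SSYTn μ n :=
    fun T => ⟨BKproof.iterBK T.1 (n-1), BKproof.iterBK_lt T.2 (by omega)⟩ with hΦ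
  have hΦinj : Function.Injective Φ := by
    intro T T' h
    apply Subtype.ext
    exact BKproof.iterBK_inj (congrArg Subtype.val h)
  have hΦw : ∀ T : SSYTn μ n, (w (Φ T) : ZMod n) = (w T : ZMod n) - (μ.card : ZMod n) := by
    intro T
    have h := BKproof.wgt_iterBK T.2 hn
    have : ((BKproof.wgt (BKproof.iterBK T.1 (n-1)) n + μ.card : ℕ) : ZMod n)
        = ((BKproof.wgt T.1 n + n * BKproof.cnt T.1 0 : ℕ) : ZMod n) := by rw [h]
    push_cast at this
    rw [ZMod.natCast_self] at this
    simp only [zero_mul, add_zero] at this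
    have hΦT : w (Φ T) = BKproof.wgt (BKproof.iterBK T.1 (n-1)) n := rfl
    rw [hΦT]
    linear_combination this
  -- fiber counts over ZMod n
  set G : ZMod n → ℕ :=
    fun r => (Finset.univ.filter (fun T : SSYTn μ n => (w T : ZMod n) = r)).card with hG
  set d : ZMod n := (μ.card : ZMod n) with hd
  have hle : ∀ r : ZMod n, G r ≤ G (r - d) := by
    intro r
    apply Finset.card_le_card_of_injOn Φ
    · intro T hT
      rw [Finset.mem_coe, Finset.mem_filter] at hT ⊢
      exact ⟨Finset.mem_univ _, by rw [hΦw T, hT.2]⟩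
    · intro a _ b _ h
      exact hΦinj h
  have hsumG : ∑ r : ZMod n, G (r - d) = ∑ r : ZMod n, G r :=
    Equiv.sum_comp (Equiv.subRight d) G
  have heq : ∀ r : ZMod n, G r = G (r - d) := by
    have := (Finset.sum_eq_sum_iff_of_le (fun r (_ : r ∈ Finset.univ) => hle r)).mp
      (by rw [hsumG])
    intro r
    exact this r (Finset.mem_univ r)
  -- d is a unit, hence G is constant
  have hconst : ∀ r s : ZMod n, G r = G s := by
    have hstep : ∀ (a : ℕ) (r : ZMod n), G r = G (r - a * d) := by
      intro a
      induction a with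
      | zero => intro r; simp
      | succ a ih =>
        intro r
        rw [ih r, heq (r - a * d)]
        congr 1
        push_cast
        ring
    intro r s
    set u : (ZMod n)ˣ := ZMod.unitOfCoprime μ.card hgcd.symm with hu
    have hud : (u : ZMod n) = d := ZMod.coe_unitOfCoprime μ.card hgcd.symm
    set a : ℕ := ((r - s) * (u⁻¹ : (ZMod n)ˣ)).val with ha
    have hcast : ((a : ℕ) : ZMod n) = (r - s) * (u⁻¹ : (ZMod n)ˣ) :=
      ZMod.natCast_rightInverse _
    have : r - a * d = s := by
      rw [hcast, ← hud]
      have : ((r - s) * (u⁻¹ : (ZMod n)ˣ)) * (u : ZMod n) = r - s := by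
        rw [mul_assoc, ← Units.val_mul, inv_mul_cancel, Units.val_one, mul_one]
      rw [this]
      ring
    rw [hstep a r, this]
  -- each fiber has cardinality M
  have hcardG : ∀ r : ZMod n, G r = M := by
    have htot : ∑ r : ZMod n, G r = Fintype.card (SSYTn μ n) := by
      rw [hG]
      rw [← Finset.card_univ,
        Finset.card_eq_sum_card_fiberwise
          (f := fun T : SSYTn μ n => (w T : ZMod n)) (t := Finset.univ)
          (fun T _ => Finset.mem_univ _)]
    have hconst0 : ∑ r : ZMod n, G r = n * G 0 := by
      rw [Finset.sum_congr rfl (fun r _ => hconst r 0)]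
      simp [Finset.card_univ, ZMod.card, mul_comm]
    have : n * G 0 = n * M := by rw [← hconst0, htot, hM]
    have hG0 : G 0 = M := Nat.eq_of_mul_eq_mul_left hn this
    intro r
    rw [hconst r 0, hG0]
  -- now the polynomial computation
  have hrw : (∑ T : SSYTn μ n,
      (Polynomial.X : Polynomial ℤ) ^ (∑ i : Fin n, (i : ℕ) * ssytContent μ n T i))
      = ∑ T : SSYTn μ n, (Polynomial.X : Polynomial ℤ) ^ (w T) := by
    apply Finset.sum_congr rfl
    intro T _
    rw [hexp T]
  rw [hrw]
  have h1 : ((Polynomial.X : Polynomial ℤ) ^ n - 1) ∣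
      (∑ T : SSYTn μ n, (Polynomial.X : Polynomial ℤ) ^ (w T))
        - ∑ T : SSYTn μ n, (Polynomial.X : Polynomial ℤ) ^ (w T % n) := by
    rw [← Finset.sum_sub_distrib]
    apply Finset.dvd_sum
    intro T _
    set a : ℕ := w T with ha
    have hX : (Polynomial.X : Polynomial ℤ) ^ a
        = ((Polynomial.X : Polynomial ℤ) ^ n) ^ (a / n)
          * (Polynomial.X : Polynomial ℤ) ^ (a % n) := by
      rw [← pow_mul, ← pow_add, Nat.div_add_mod]
    rw [hX]
    have hfac : ((Polynomial.X : Polynomial ℤ) ^ n) ^ (a / n)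
          * (Polynomial.X : Polynomial ℤ) ^ (a % n)
        - (Polynomial.X : Polynomial ℤ) ^ (a % n)
        = (((Polynomial.X : Polynomial ℤ) ^ n) ^ (a / n) - 1)
          * (Polynomial.X : Polynomial ℤ) ^ (a % n) := by ring
    rw [hfac]
    apply Dvd.dvd.mul_right
    have := sub_dvd_pow_sub_pow ((Polynomial.X : Polynomial ℤ) ^ n) 1 (a / n)
    simpa using this
  have h2 : (∑ T : SSYTn μ n, (Polynomial.X : Polynomial ℤ) ^ (w T % n))
      = (M : Polynomial ℤ) * ∑ k ∈ Finset.range n, (Polynomial.X : Polynomial ℤ) ^ k := by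
    rw [Finset.mul_sum]
    have hfw := Finset.sum_fiberwise_of_maps_to
      (g := fun T : SSYTn μ n => w T % n) (t := Finset.range n) (s := Finset.univ)
      (fun T _ => Finset.mem_range.mpr (Nat.mod_lt _ hn))
      (fun T : SSYTn μ n => (Polynomial.X : Polynomial ℤ) ^ (w T % n))
    rw [← hfw]
    apply Finset.sum_congr rfl
    intro r hr
    have hrn : r < n := Finset.mem_range.mp hr
    have hfib : (Finset.univ.filter (fun T : SSYTn μ n => w T % n = r))
        = (Finset.univ.filter (fun T : SSYTn μ n => (w T : ZMod n) = (r : ZMod n))) := by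
      apply Finset.filter_congr
      intro T _
      constructor
      · intro h
        rw [ZMod.natCast_eq_natCast_iff]
        show w T % n = r % n
        rw [h, Nat.mod_eq_of_lt hrn]
      · intro h
        rw [ZMod.natCast_eq_natCast_iff] at h
        have h' : w T % n = r % n := h
        rw [Nat.mod_eq_of_lt hrn] at h'
        exact h'
    calc ∑ T ∈ Finset.univ.filter (fun T : SSYTn μ n => w T % n = r),
          (Polynomial.X : Polynomial ℤ) ^ (w T % n)
        = ∑ T ∈ Finset.univ.filter (fun T : SSYTn μ n => w T % n = r),
          (Polynomial.X : Polynomial ℤ) ^ r := by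
          apply Finset.sum_congr rfl
          intro T hT
          rw [Finset.mem_filter] at hT
          rw [hT.2]
      _ = ((Finset.univ.filter (fun T : SSYTn μ n => w T % n = r)).card)
            • (Polynomial.X : Polynomial ℤ) ^ r := by
          rw [Finset.sum_const]
      _ = (M : Polynomial ℤ) * (Polynomial.X : Polynomial ℤ) ^ r := by
          rw [hfib]
          have hM' : (Finset.univ.filter
              (fun T : SSYTn μ n => (w T : ZMod n) = (r : ZMod n))).card = M :=
            hcardG (r : ZMod n)
          rw [hM']
          simp [nsmul_eq_mul]
  rw [← h2]
  exact h1
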